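/- For all natural numbers p and q with p ≥ q, (2p + 2q + 2)! / ((2p+1)! · (2q+1)!) = ∑_{k=0}^{q} ( (p+q+1)! / ((p−k)! · (q−k)! · (2k+1)!) ) · 2^{2k+1}. Equivalently, the binomial coefficient C(2p+2q+2, 2q+1) equals the sum over k = 0, …, q of the multinomial coefficient (p+q+1 choose p−k, q−k, 2k+1) times 2·4^k. -/

import Mathlib

open Nat Finset

open Polynomial

lemma coeff_one_add_two_X_pow (n j : ℕ) :
    ((1 + 2 * X : Polynomial ℕ) ^ n).coeff j = n.choose j * 2 ^ j := by
  rw [add_comm, add_pow, finset_sum_coeff]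
  have : ∀ k ∈ range (n + 1),
      (((2 * X : Polynomial ℕ)) ^ k * 1 ^ (n - k) * (n.choose k : Polynomial ℕ)).coeff j
        = if k = j then n.choose j * 2 ^ j else 0 := by
    intro k hk
    rw [one_pow, mul_one, mul_pow, mul_comm, ← mul_assoc]
    have h2 : ((2 : Polynomial ℕ) ^ k) = Polynomial.C (2 ^ k) := by
      simp [Polynomial.C_pow]
    rw [h2]
    have h3 : (n.choose k : Polynomial ℕ) = Polynomial.C (n.choose k) := by simp
    rw [h3, ← Polynomial.C_mul, Polynomial.coeff_C_mul, Polynomial.coeff_X_pow]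
    rcases eq_or_ne k j with h | h
    · subst h; simp [mul_comm]
    · simp [h, h.symm]
  rw [Finset.sum_congr rfl this]
  rw [Finset.sum_ite_eq' (range (n+1)) j]
  split_ifs with h
  · rfl
  · rw [mem_range, not_lt] at h
    rw [Nat.choose_eq_zero_of_lt h]; ring

lemma key_identity (n m : ℕ) :
    (2 * n).choose m = ∑ t ∈ range (n + 1),
      (if 2 * t ≤ m then (n - t).choose (m - 2 * t) * 2 ^ (m - 2 * t) else 0)
        * n.choose t := by
  have h1 : ((1 + X : Polynomial ℕ) ^ (2 * n)).coeff m = (2 * n).choose m := by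
    rw [add_comm]; exact Polynomial.coeff_X_add_one_pow ℕ (2 * n) m
  have h2 : (1 + X : Polynomial ℕ) ^ (2 * n)
      = (X ^ 2 + (1 + 2 * X)) ^ n := by
    have h : (X ^ 2 + (1 + 2 * X) : Polynomial ℕ) = (1 + X) ^ 2 := by ring
    rw [h, ← pow_mul]
  rw [h2, add_pow, finset_sum_coeff] at h1
  rw [← h1]
  refine Finset.sum_congr rfl fun t ht => ?_
  have h3 : ((X ^ 2 : Polynomial ℕ)) ^ t * (1 + 2 * X) ^ (n - t) * ((n.choose t : ℕ) : Polynomial ℕ)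
      = (1 + 2 * X) ^ (n - t) * X ^ (2 * t) * Polynomial.C (n.choose t) := by
    rw [← pow_mul, show ((n.choose t : ℕ) : Polynomial ℕ) = Polynomial.C (n.choose t) by simp]
    ring
  rw [h3, Polynomial.coeff_mul_C, Polynomial.coeff_mul_X_pow']
  split_ifs with h
  · rw [coeff_one_add_two_X_pow]
  · simp

lemma key2 (p q : ℕ) (hpq : q ≤ p) :
    (2 * p + 2 * q + 2).choose (2 * q + 1)
      = ∑ k ∈ range (q + 1),
          (p + q + 1).choose (q - k) * (p + 1 + k).choose (2 * k + 1) * 2 ^ (2 * k + 1) := by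
  have h := key_identity (p + q + 1) (2 * q + 1)
  rw [show 2 * (p + q + 1) = 2 * p + 2 * q + 2 by ring] at h
  rw [h]
  rw [← Finset.sum_subset (Finset.range_subset_range.2 (by omega : q + 1 ≤ p + q + 1 + 1))
    (by intro t _ ht2; rw [mem_range, not_lt] at ht2
        rw [if_neg (by omega), zero_mul])]
  rw [← Finset.sum_range_reflect]
  refine Finset.sum_congr rfl fun k hk => ?_
  rw [mem_range] at hk
  have hkq : k ≤ q := by omega
  have e0 : q + 1 - 1 - k = q - k := by omega
  rw [e0, if_pos (by omega)]
  have e1 : p + q + 1 - (q - k) = p + 1 + k := by omega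
  have e2 : 2 * q + 1 - 2 * (q - k) = 2 * k + 1 := by omega
  rw [e1, e2]
  ring

theorem multinomial_identity_odd (p q : ℕ) (hpq : q ≤ p) :
    ((2 * p + 2 * q + 2)! : ℚ) / ((2 * p + 1)! * (2 * q + 1)!)
      = ∑ k ∈ Finset.range (q + 1),
          ((p + q + 1)! : ℚ) / ((p - k)! * (q - k)! * (2 * k + 1)!)
            * 2 ^ (2 * k + 1) := by
  have h1 : ((2 * p + 2 * q + 2)! : ℚ) / ((2 * p + 1)! * (2 * q + 1)!)
      = ((2 * p + 2 * q + 2).choose (2 * q + 1) : ℚ) := by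
    rw [Nat.cast_choose ℚ (by omega : 2 * q + 1 ≤ 2 * p + 2 * q + 2)]
    have e2 : 2 * p + 2 * q + 2 - (2 * q + 1) = 2 * p + 1 := by omega
    rw [e2]; ring
  rw [h1, key2 p q hpq, Nat.cast_sum]
  refine Finset.sum_congr rfl fun k hk => ?_
  rw [mem_range] at hk
  have hkq : k ≤ q := by omega
  push_cast
  rw [Nat.cast_choose ℚ (by omega : q - k ≤ p + q + 1),
      Nat.cast_choose ℚ (by omega : 2 * k + 1 ≤ p + 1 + k)]
  have e1 : p + q + 1 - (q - k) = p + 1 + k := by omega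
  have e2 : p + 1 + k - (2 * k + 1) = p - k := by omega
  rw [e1, e2]
  have f1 : ((p - k)! : ℚ) ≠ 0 := Nat.cast_ne_zero.2 (Nat.factorial_ne_zero _)
  have f2 : ((q - k)! : ℚ) ≠ 0 := Nat.cast_ne_zero.2 (Nat.factorial_ne_zero _)
  have f3 : (((2 * k + 1)!) : ℚ) ≠ 0 := Nat.cast_ne_zero.2 (Nat.factorial_ne_zero _)
  have f4 : (((p + 1 + k)!) : ℚ) ≠ 0 := Nat.cast_ne_zero.2 (Nat.factorial_ne_zero _)
  field_simp
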